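/- Let B be a (possibly non-unital) ring, J ⊆ B a two-sided ideal, and A a ring with unit. Then any surjective ring homomorphism φ : J → A extends uniquely to a ring homomorphism φ̃ : B → A. -/
import Mathlib


/-- Let `B` be a (possibly non-unital) ring, `J ⊆ B` a two-sided ideal,
and `A` a ring with unit. Then any surjective ring homomorphism `φ : J → A` extends
uniquely to a ring homomorphism `φ̃ : B → A`. -/
theorem extend_surjective_hom_of_ideal
    {B : Type*} [NonUnitalRing B] {A : Type*} [Ring A]
    (J : NonUnitalSubring B)
    (hJ : ∀ b x : B, x ∈ J → b * x ∈ J ∧ x * b ∈ J)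
    (φ : J →ₙ+* A) (hφ : Function.Surjective φ) :
    ∃! ψ : B →ₙ+* A, ∀ j : J, ψ (j : B) = φ j := by
  obtain ⟨θ, hθ⟩ := hφ 1
  have hmem : ∀ b : B, (θ : B) * b ∈ J := fun b => (hJ b θ θ.2).2
  have hmem' : ∀ b : B, b * (θ : B) ∈ J := fun b => (hJ b θ θ.2).1
  have hmul : ∀ (x y : J) (h : (x : B) * y ∈ J), φ ⟨(x : B) * y, h⟩ = φ x * φ y := by
    intro x y h
    have : (⟨(x : B) * y, h⟩ : J) = x * y := rfl
    rw [this, map_mul]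
  have key1 : ∀ z : J, φ ⟨(θ : B) * z, hmem z⟩ = φ z := by
    intro z; rw [hmul θ z (hmem z), hθ, one_mul]
  have key2 : ∀ z : J, φ ⟨(z : B) * θ, hmem' z⟩ = φ z := by
    intro z; rw [hmul z θ (hmem' z), hθ, mul_one]
  have key3 : ∀ b : B, φ ⟨(θ : B) * b, hmem b⟩ = φ ⟨b * (θ : B), hmem' b⟩ := by
    intro b
    have h1 := key2 ⟨(θ : B) * b, hmem b⟩
    have h2 := key1 ⟨b * (θ : B), hmem' b⟩
    rw [← h1, ← h2]
    exact congrArg φ (Subtype.ext (mul_assoc (θ : B) b (θ : B)))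
  refine ⟨{ toFun := fun b => φ ⟨(θ : B) * b, hmem b⟩
            map_mul' := ?_
            map_zero' := ?_
            map_add' := ?_ }, ?_, ?_⟩
  · intro b c
    show φ ⟨(θ : B) * (b * c), hmem _⟩ = φ ⟨(θ : B) * b, hmem b⟩ * φ ⟨(θ : B) * c, hmem c⟩
    have h1 := key2 ⟨(θ : B) * (b * c), hmem _⟩
    rw [← h1]
    have heq : ((θ : B) * (b * c)) * θ = ((θ : B) * b) * (c * (θ : B)) := by
      simp only [mul_assoc]
    rw [show (⟨((θ : B) * (b * c)) * θ, hmem' _⟩ : J)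
          = ⟨((θ : B) * b) * (c * (θ : B)), by rw [← heq]; exact hmem' _⟩
        from Subtype.ext heq]
    rw [hmul ⟨(θ : B) * b, hmem b⟩ ⟨c * (θ : B), hmem' c⟩ _, ← key3 c]
  · show φ ⟨(θ : B) * 0, hmem 0⟩ = 0
    rw [show (⟨(θ : B) * 0, hmem 0⟩ : J) = 0 from Subtype.ext (mul_zero _), map_zero]
  · intro b c
    show φ ⟨(θ : B) * (b + c), hmem _⟩ = φ ⟨(θ : B) * b, hmem b⟩ + φ ⟨(θ : B) * c, hmem c⟩
    rw [show (⟨(θ : B) * (b + c), hmem _⟩ : J)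
          = ⟨(θ : B) * b, hmem b⟩ + ⟨(θ : B) * c, hmem c⟩
        from Subtype.ext (mul_add _ _ _), map_add]
  · intro j
    exact key1 j
  · intro ψ' h'
    ext b
    have h1 : ψ' ((θ : B) * b) = ψ' (θ : B) * ψ' b := map_mul ψ' _ _
    have h2 : ψ' ((θ : B) * b) = φ ⟨(θ : B) * b, hmem b⟩ := h' ⟨(θ : B) * b, hmem b⟩
    have h3 : ψ' (θ : B) = 1 := by rw [h' θ, hθ]
    show ψ' b = φ ⟨(θ : B) * b, hmem b⟩
    rw [← h2, h1, h3, one_mul]
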